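/- In the stable matching game, a pure strategy profile x* ∈ {0,1}^{n×n} is the characteristic vector of a stable matching if and only if x* is a pure Nash equilibrium of the stable matching game. -/
import Mathlib


open Finset Real MeasureTheory

namespace SM

variable {n : ℕ}

/-- The set of men that woman `w` strictly prefers to man `m`
(`rankW w k` is woman `w`'s cardinal ranking score of man `k`;
`k >_w m` iff `rankW w m < rankW w k`). -/
noncomputable def better (rankW : Fin n → Fin n → ℝ) (w m : Fin n) : Finset (Fin n) :=
  Finset.univ.filter fun k => rankW w m < rankW w k

/-- Market assumptions: men's cardinal preferences lie in `(0,1]` with no ties, and each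
woman's ranking of the men is strict (injective scores). -/
def MarketHyp (μp rankW : Fin n → Fin n → ℝ) : Prop :=
  (∀ m w, μp m w ∈ Set.Ioc (0:ℝ) 1) ∧
  (∀ m w w', w ≠ w' → μp m w ≠ μp m w') ∧
  (∀ w, Function.Injective (rankW w))

/-- `v_{mw}(x) = μ_{mw} ∏_{k >_w m} (1 - x_{kw})`. -/
noncomputable def vv (μp rankW : Fin n → Fin n → ℝ) (x : Fin n → Fin n → ℝ) (m w : Fin n) : ℝ :=
  μp m w * ∏ k ∈ better rankW w m, (1 - x k w)

/-- Payoff `u_m(x) = ∑_w v_{mw}(x) x_{mw}` of man `m` in the stable matching game. -/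
noncomputable def uu (μp rankW : Fin n → Fin n → ℝ) (x : Fin n → Fin n → ℝ) (m : Fin n) : ℝ :=
  ∑ w, vv μp rankW x m w * x m w

/-- Mixed strategy: a probability vector over the women. -/
def IsStrategy (y : Fin n → ℝ) : Prop := (∀ w, 0 ≤ y w) ∧ ∑ w, y w = 1

/-- Pure strategy: the indicator vector of a single woman. -/
def IsPure (y : Fin n → ℝ) : Prop := ∃ w₀, y = fun w => if w = w₀ then (1:ℝ) else 0

/-- (Mixed) Nash equilibrium of the stable matching game. -/
def IsNE (μp rankW : Fin n → Fin n → ℝ) (x : Fin n → Fin n → ℝ) : Prop :=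
  (∀ m, IsStrategy (x m)) ∧
  ∀ m y, IsStrategy y → uu μp rankW (Function.update x m y) m ≤ uu μp rankW x m

/-- Pure Nash equilibrium of the stable matching game. -/
def IsPureNE (μp rankW : Fin n → Fin n → ℝ) (x : Fin n → Fin n → ℝ) : Prop :=
  (∀ m, IsPure (x m)) ∧
  ∀ m y, IsPure y → uu μp rankW (Function.update x m y) m ≤ uu μp rankW x m

/-- Characteristic vector of the perfect matching `σ`. -/
def charVec (σ : Equiv.Perm (Fin n)) : Fin n → Fin n → ℝ :=
  fun m w => if w = σ m then 1 else 0

/-- A perfect matching `σ` is stable iff it admits no blocking pair `(m, σ m')`. -/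
def IsStableMatching (μp rankW : Fin n → Fin n → ℝ) (σ : Equiv.Perm (Fin n)) : Prop :=
  ¬ ∃ m m' : Fin n, m ≠ m' ∧ μp m (σ m) < μp m (σ m') ∧ rankW (σ m') m' < rankW (σ m') m

/-- `Δ = min_{m, w ≠ w'} |μ_{mw} - μ_{mw'}|`. -/
noncomputable def gapDelta (μp : Fin n → Fin n → ℝ) : ℝ :=
  sInf {d : ℝ | ∃ m w w' : Fin n, w ≠ w' ∧ d = |μp m w - μp m w'|}

/-- `μ_min = min_{m,w} μ_{mw}`. -/
noncomputable def muMin (μp : Fin n → Fin n → ℝ) : ℝ :=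
  sInf {a : ℝ | ∃ m w : Fin n, a = μp m w}

/-- `μ_max = max_{m,w} μ_{mw}`. -/
noncomputable def muMax (μp : Fin n → Fin n → ℝ) : ℝ :=
  sSup {a : ℝ | ∃ m w : Fin n, a = μp m w}

/-- Entrywise ℓ¹ distance on strategy profiles. -/
noncomputable def l1dist (x y : Fin n → Fin n → ℝ) : ℝ :=
  ∑ m, ∑ w, |x m w - y m w|

/-- The logit (exponential-weights) map. -/
noncomputable def logit (η : ℝ) (L : Fin n → ℝ) (w : Fin n) : ℝ :=
  Real.exp (η * L w) / ∑ w', Real.exp (η * L w')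

lemma mem_better {rankW : Fin n → Fin n → ℝ} {w m k : Fin n} :
    k ∈ better rankW w m ↔ rankW w m < rankW w k := by
  simp [better]

lemma not_self_mem_better {rankW : Fin n → Fin n → ℝ} {w m : Fin n} :
    m ∉ better rankW w m := by
  simp [better]

lemma pure_prod_eq_zero {rankW x : Fin n → Fin n → ℝ} {p : Fin n → Fin n}
    (hxp : ∀ k w, x k w = if w = p k then 1 else 0) {w m k : Fin n}
    (hk : k ∈ better rankW w m) (hpk : p k = w) :
    ∏ j ∈ better rankW w m, (1 - x j w) = 0 := by
  apply Finset.prod_eq_zero hk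
  rw [hxp, if_pos hpk.symm]; ring

lemma pure_prod_eq_one {rankW x : Fin n → Fin n → ℝ} {p : Fin n → Fin n}
    (hxp : ∀ k w, x k w = if w = p k then 1 else 0) {w m : Fin n}
    (h : ∀ k ∈ better rankW w m, p k ≠ w) :
    ∏ j ∈ better rankW w m, (1 - x j w) = 1 := by
  apply Finset.prod_eq_one
  intro j hj
  rw [hxp, if_neg (fun he => h j hj he.symm)]; ring

lemma uu_pure (μp rankW x : Fin n → Fin n → ℝ) (p : Fin n → Fin n)
    (hxp : ∀ k w, x k w = if w = p k then 1 else 0) (m : Fin n) :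
    uu μp rankW x m = vv μp rankW x m (p m) := by
  unfold uu
  rw [Finset.sum_eq_single (p m)]
  · rw [hxp, if_pos rfl, mul_one]
  · intro w _ hw; rw [hxp, if_neg hw, mul_zero]
  · intro h; exact absurd (Finset.mem_univ _) h

lemma update_pure (x : Fin n → Fin n → ℝ) (p : Fin n → Fin n)
    (hxp : ∀ k w, x k w = if w = p k then 1 else 0) (m w₀ : Fin n) :
    ∀ k w, Function.update x m (fun w => if w = w₀ then (1:ℝ) else 0) k w
      = if w = Function.update p m w₀ k then 1 else 0 := by
  intro k w
  by_cases hk : k = m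
  · subst hk; simp
  · rw [Function.update_of_ne hk, Function.update_of_ne hk, hxp]

/-- Theorem 1: a pure strategy profile is the characteristic vector of a
stable matching iff it is a pure Nash equilibrium of the stable matching game. -/
theorem pure_NE_iff_stable {n : ℕ} (μp rankW : Fin n → Fin n → ℝ)
    (hM : MarketHyp μp rankW)
    (x : Fin n → Fin n → ℝ) (hx : ∀ m, IsPure (x m)) :
    (∃ σ : Equiv.Perm (Fin n), IsStableMatching μp rankW σ ∧ x = charVec σ) ↔
      IsPureNE μp rankW x := by
  obtain ⟨hμpos, hμne, hrinj⟩ := hM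
  constructor
  · -- stable matching ⇒ pure NE
    rintro ⟨σ, hσ, rfl⟩
    have hxp : ∀ k w, charVec σ k w = if w = σ k then 1 else 0 := fun k w => rfl
    refine ⟨fun m => ⟨σ m, rfl⟩, ?_⟩
    rintro m y ⟨w₀, rfl⟩
    set p' : Fin n → Fin n := Function.update (⇑σ) m w₀ with hp'
    have hxp' := update_pure (charVec σ) (⇑σ) hxp m w₀
    rw [uu_pure μp rankW _ p' hxp' m, uu_pure μp rankW _ (⇑σ) hxp m]
    have hp'm : p' m = w₀ := Function.update_self m w₀ (⇑σ)
    have hux : vv μp rankW (charVec σ) m (σ m) = μp m (σ m) := by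
      unfold vv
      rw [pure_prod_eq_one hxp, mul_one]
      intro k hk hke
      exact not_self_mem_better (σ.injective hke ▸ hk)
    rw [hux, hp'm]
    unfold vv
    by_cases hw₀ : w₀ = σ m
    · subst hw₀
      rw [pure_prod_eq_one hxp', mul_one]
      intro k hk hke
      rcases eq_or_ne k m with h | h
      · exact not_self_mem_better (h ▸ hk)
      · rw [Function.update_of_ne h] at hke
        exact h (σ.injective hke)
    · set m' : Fin n := σ.symm w₀ with hm'
      have hσm' : σ m' = w₀ := σ.apply_symm_apply w₀
      have hmm' : m' ≠ m := fun h => hw₀ (by rw [← hσm', h])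
      by_cases hb : rankW w₀ m < rankW w₀ m'
      · rw [pure_prod_eq_zero hxp' (mem_better.mpr hb)
          (by rw [Function.update_of_ne hmm', hσm']), mul_zero]
        exact le_of_lt (hμpos m (σ m)).1
      · rw [pure_prod_eq_one hxp', mul_one]
        · -- need μp m w₀ ≤ μp m (σ m), from stability
          by_contra hlt
          push_neg at hlt
          have hr : rankW w₀ m' < rankW w₀ m :=
            lt_of_le_of_ne (not_lt.mp hb) (fun h => hmm' (hrinj w₀ h))
          exact hσ ⟨m, m', fun h => hmm' h.symm, by rw [hσm']; exact hlt,
            by rw [hσm']; exact hr⟩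
        · intro k hk hke
          rcases eq_or_ne k m with h | h
          · exact not_self_mem_better (h ▸ hk)
          · rw [Function.update_of_ne h] at hke
            have : k = m' := by rw [hm', ← hke]; exact (σ.symm_apply_apply k).symm
            exact hb (this ▸ mem_better.mp hk)
  · -- pure NE ⇒ stable matching
    rintro ⟨-, hNE⟩
    choose p hp using hx
    have hxp : ∀ k w, x k w = if w = p k then 1 else 0 := fun k w => by rw [hp k]
    -- payoffs in the current profile
    have hpos : ∀ m w (p' : Fin n → Fin n) (x' : Fin n → Fin n → ℝ),
        (∀ k w', x' k w' = if w' = p' k then 1 else 0) → p' m = w →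
        (∀ k ∈ better rankW w m, p' k ≠ w) → uu μp rankW x' m = μp m w := by
      intro m w p' x' hxp' hp'm hfree
      rw [uu_pure μp rankW x' p' hxp' m, hp'm]
      unfold vv
      rw [pure_prod_eq_one hxp' hfree, mul_one]
    -- if man m gets payoff 0 we contradict NE (deviate to a free woman)
    have key : ∀ m : Fin n, ¬ ∃ k ∈ better rankW (p m) m, p k = p m := by
      rintro m ⟨k, hk, hpk⟩
      have hu0 : uu μp rankW x m = 0 := by
        rw [uu_pure μp rankW x p hxp m]
        unfold vv
        rw [pure_prod_eq_zero hxp hk hpk, mul_zero]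
      -- pigeonhole: some woman is chosen by no man other than m
      have hfree : ∃ w' : Fin n, ∀ j, j ≠ m → p j ≠ w' := by
        by_contra hc
        push_neg at hc
        have hsub : (Finset.univ : Finset (Fin n)) ⊆ (Finset.univ.erase m).image p := by
          intro w' _
          obtain ⟨j, hj, hjw⟩ := hc w'
          exact Finset.mem_image.mpr ⟨j, Finset.mem_erase.mpr ⟨hj, Finset.mem_univ j⟩, hjw⟩
        have h1 : (Finset.univ : Finset (Fin n)).card
            ≤ ((Finset.univ.erase m).image p).card := Finset.card_le_card hsub
        have h2 : ((Finset.univ.erase m).image p).card ≤ (Finset.univ.erase m).card :=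
          Finset.card_image_le
        rw [Finset.card_erase_of_mem (Finset.mem_univ m)] at h2
        have h3 : (Finset.univ : Finset (Fin n)).card - 1
            < (Finset.univ : Finset (Fin n)).card :=
          Nat.sub_lt (by simpa using Fin.pos m) one_pos
        omega
      obtain ⟨w', hw'⟩ := hfree
      have hdev := hNE m (fun w => if w = w' then (1:ℝ) else 0) ⟨w', rfl⟩
      rw [hu0, hpos m w' (Function.update p m w') _
        (update_pure x p hxp m w') (Function.update_self m w' p) ?_] at hdev
      · exact absurd hdev (not_le.mpr (hμpos m w').1)
      · intro j hj hje
        rcases eq_or_ne j m with h | h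
        · exact not_self_mem_better (h ▸ hj)
        · rw [Function.update_of_ne h] at hje
          exact hw' j h hje
    -- p is injective
    have hinj : Function.Injective p := by
      intro a b hab
      by_contra hne
      rcases lt_trichotomy (rankW (p a) a) (rankW (p a) b) with h | h | h
      · exact key a ⟨b, mem_better.mpr h, hab.symm⟩
      · exact hne (hrinj (p a) h)
      · rw [hab] at h
        exact key b ⟨a, mem_better.mpr h, hab⟩
    set σ : Equiv.Perm (Fin n) := Equiv.ofBijective p (Finite.injective_iff_bijective.mp hinj)
      with hσdef
    have hσp : ∀ k, σ k = p k := fun k => rfl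
    have hxeq : x = charVec σ := by
      funext k w
      rw [hxp k w, charVec, hσp]
    refine ⟨σ, ?_, hxeq⟩
    rintro ⟨m, m', hmm', hμlt, hrlt⟩
    -- man m deviates to w₀ = p m'
    have hu : uu μp rankW x m = μp m (p m) := by
      apply hpos m (p m) p x hxp rfl
      intro k hk hke
      exact not_self_mem_better ((hinj hke) ▸ hk)
    have hdev := hNE m (fun w => if w = p m' then (1:ℝ) else 0) ⟨p m', rfl⟩
    rw [hu, hpos m (p m') (Function.update p m (p m')) _
      (update_pure x p hxp m (p m')) (Function.update_self m (p m') p) ?_] at hdev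
    · exact absurd hdev (not_le.mpr hμlt)
    · intro k hk hke
      rcases eq_or_ne k m with h | h
      · exact not_self_mem_better (h ▸ hk)
      · rw [Function.update_of_ne h] at hke
        have : k = m' := hinj hke
        subst this
        exact absurd (mem_better.mp hk) (not_lt.mpr (le_of_lt hrlt))

end SM
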